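/- A continuous function h on a real algebraic variety X is hereditarily rational if and only if there exists a chain of closed subvarieties ∅ = X₋₁ ⊂ X₀ ⊂ ⋯ ⊂ X_m = X such that for each i = 0,...,m the restriction of h to X_i ∖ X_{i−1} is a regular function. -/

import Mathlib

open MvPolynomial

/-- A real algebraic subset of `ℝⁿ`: the common zero set of a family of polynomials. -/
def IsAlgSet {n : ℕ} (V : Set (Fin n → ℝ)) : Prop :=
  ∃ S : Set (MvPolynomial (Fin n) ℝ), V = {x | ∀ p ∈ S, eval x p = 0}

/-- An irreducible real algebraic subset. -/
def IsIrredAlgSet {n : ℕ} (Z : Set (Fin n → ℝ)) : Prop :=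
  IsAlgSet Z ∧ Z.Nonempty ∧
    ∀ Z₁ Z₂ : Set (Fin n → ℝ), IsAlgSet Z₁ → IsAlgSet Z₂ → Z = Z₁ ∪ Z₂ → Z = Z₁ ∨ Z = Z₂

/-- `h` is regular on `A`: at each point it is a quotient of polynomials with
nonvanishing denominator. -/
def RegularOn {n : ℕ} (h : (Fin n → ℝ) → ℝ) (A : Set (Fin n → ℝ)) : Prop :=
  ∀ x ∈ A, ∃ p q : MvPolynomial (Fin n) ℝ, eval x q ≠ 0 ∧
    ∀ y ∈ A, eval y q ≠ 0 → h y = eval y p / eval y q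

/-- `A` is Zariski dense in `Z`. -/
def ZariskiDenseIn {n : ℕ} (A Z : Set (Fin n → ℝ)) : Prop :=
  ∀ W : Set (Fin n → ℝ), IsAlgSet W → A ⊆ W → Z ⊆ W

/-- `h` is hereditarily rational on `X`: every irreducible real subvariety `Z ⊆ X`
has a Zariski dense (Zariski) open subset on which `h` is regular. -/
def HereditarilyRational {n : ℕ} (X : Set (Fin n → ℝ)) (h : (Fin n → ℝ) → ℝ) : Prop :=
  ∀ Z ⊆ X, IsIrredAlgSet Z →
    ∃ Z' : Set (Fin n → ℝ), IsAlgSet Z' ∧ ZariskiDenseIn (Z \ Z') Z ∧ RegularOn h (Z \ Z')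

namespace Stmt12Aux

variable {n : ℕ}

def zlocus (S : Set (MvPolynomial (Fin n) ℝ)) : Set (Fin n → ℝ) :=
  {x | ∀ p ∈ S, eval x p = 0}

lemma isAlgSet_iff {V : Set (Fin n → ℝ)} : IsAlgSet V ↔ ∃ S, V = zlocus S := Iff.rfl

lemma algSet_empty : IsAlgSet (∅ : Set (Fin n → ℝ)) := by
  refine ⟨{1}, ?_⟩
  ext x
  simp

lemma algSet_inter {V W : Set (Fin n → ℝ)} (hV : IsAlgSet V) (hW : IsAlgSet W) :
    IsAlgSet (V ∩ W) := by
  obtain ⟨S, rfl⟩ := hV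
  obtain ⟨T, rfl⟩ := hW
  refine ⟨S ∪ T, ?_⟩
  ext x
  constructor
  · rintro ⟨h1, h2⟩ p hp
    rcases hp with hp | hp
    · exact h1 p hp
    · exact h2 p hp
  · intro hx
    exact ⟨fun p hp => hx p (Or.inl hp), fun p hp => hx p (Or.inr hp)⟩

lemma algSet_union {V W : Set (Fin n → ℝ)} (hV : IsAlgSet V) (hW : IsAlgSet W) :
    IsAlgSet (V ∪ W) := by
  obtain ⟨S, rfl⟩ := hV
  obtain ⟨T, rfl⟩ := hW
  refine ⟨{r | ∃ p ∈ S, ∃ q ∈ T, r = p * q}, ?_⟩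
  ext x
  constructor
  · rintro (hx | hx) r ⟨p, hp, q, hq, rfl⟩ <;> simp [map_mul]
    · exact Or.inl (hx p hp)
    · exact Or.inr (hx q hq)
  · intro hx
    by_cases hxS : ∀ p ∈ S, eval x p = 0
    · exact Or.inl hxS
    · push_neg at hxS
      obtain ⟨p, hp, hpx⟩ := hxS
      refine Or.inr fun q hq => ?_
      have := hx (p * q) ⟨p, hp, q, hq, rfl⟩
      rw [map_mul] at this
      exact (mul_eq_zero.mp this).resolve_left hpx

lemma algSet_biUnion {ι : Type*} (s : Finset ι) (f : ι → Set (Fin n → ℝ))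
    (hf : ∀ i ∈ s, IsAlgSet (f i)) : IsAlgSet (⋃ i ∈ s, f i) := by
  classical
  induction s using Finset.induction_on with
  | empty => simpa using algSet_empty
  | @insert a s ha IH =>
    rw [Finset.set_biUnion_insert]
    exact algSet_union (hf a (Finset.mem_insert_self a s))
      (IH fun i hi => hf i (Finset.mem_insert_of_mem hi))

/-- The vanishing ideal of a set. -/
noncomputable def vI (V : Set (Fin n → ℝ)) : Ideal (MvPolynomial (Fin n) ℝ) where
  carrier := {p | ∀ x ∈ V, eval x p = 0}
  add_mem' := by
    intro a b ha hb x hx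
    simp [map_add, ha x hx, hb x hx]
  zero_mem' := by intro x _; simp
  smul_mem' := by
    intro c a ha x hx
    simp [smul_eq_mul, map_mul, ha x hx]

lemma mem_vI {p : MvPolynomial (Fin n) ℝ} {V : Set (Fin n → ℝ)} :
    p ∈ vI V ↔ ∀ x ∈ V, eval x p = 0 := Iff.rfl

/-- Strict inclusion of algebraic sets (the smaller one algebraic). -/
def AlgLt (A B : Set (Fin n → ℝ)) : Prop := IsAlgSet A ∧ A ⊂ B

lemma algLt_wf : WellFounded (AlgLt (n := n)) := by
  have wf : WellFounded ((· > ·) : Ideal (MvPolynomial (Fin n) ℝ) → _ → Prop) :=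
    (inferInstance : WellFoundedGT (Ideal (MvPolynomial (Fin n) ℝ))).wf
  refine Subrelation.wf (r := InvImage (· > ·) vI) ?_ (InvImage.wf _ wf)
  rintro A B ⟨⟨S, rfl⟩, hsub⟩
  have hle : vI B ≤ vI {x | ∀ p ∈ S, eval x p = 0} := fun p hp x hx => hp x (hsub.1 hx)
  obtain ⟨x, hxB, hxA⟩ := Set.exists_of_ssubset hsub
  have : ¬ ∀ p ∈ S, eval x p = 0 := hxA
  push_neg at this
  obtain ⟨p, hpS, hpx⟩ := this
  refine lt_of_le_of_ne hle fun he => hpx ?_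
  have hpA : p ∈ vI {x | ∀ p ∈ S, eval x p = 0} := fun y hy => hy p hpS
  rw [← he] at hpA
  exact hpA x hxB


lemma decomp (V : Set (Fin n → ℝ)) (hV : IsAlgSet V) :
    ∃ 𝒞 : Finset (Set (Fin n → ℝ)), (∀ C ∈ 𝒞, IsIrredAlgSet C) ∧ V = ⋃ C ∈ 𝒞, C := by
  classical
  revert hV
  refine (algLt_wf (n := n)).induction
    (C := fun V => IsAlgSet V → ∃ 𝒞 : Finset (Set (Fin n → ℝ)),
      (∀ C ∈ 𝒞, IsIrredAlgSet C) ∧ V = ⋃ C ∈ 𝒞, C) V ?_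
  intro V IH hV
  by_cases hemp : V = ∅
  · exact ⟨∅, by simp, by simp [hemp]⟩
  by_cases hirr : IsIrredAlgSet V
  · exact ⟨{V}, by simpa using hirr, by simp⟩
  have hne : V.Nonempty := Set.nonempty_iff_ne_empty.mpr hemp
  have : ¬ ∀ Z₁ Z₂ : Set (Fin n → ℝ), IsAlgSet Z₁ → IsAlgSet Z₂ → V = Z₁ ∪ Z₂ →
      V = Z₁ ∨ V = Z₂ := fun hcon => hirr ⟨hV, hne, hcon⟩
  push_neg at this
  obtain ⟨Z₁, Z₂, h1, h2, heq, hne1, hne2⟩ := this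
  have hs1 : Z₁ ⊂ V := Set.ssubset_iff_subset_ne.mpr
    ⟨by rw [heq]; exact Set.subset_union_left, fun hzv => hne1 hzv.symm⟩
  have hs2 : Z₂ ⊂ V := Set.ssubset_iff_subset_ne.mpr
    ⟨by rw [heq]; exact Set.subset_union_right, fun hzv => hne2 hzv.symm⟩
  obtain ⟨𝒞₁, hC1, hU1⟩ := IH Z₁ ⟨h1, hs1⟩ h1
  obtain ⟨𝒞₂, hC2, hU2⟩ := IH Z₂ ⟨h2, hs2⟩ h2
  refine ⟨𝒞₁ ∪ 𝒞₂, ?_, ?_⟩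
  · intro C hC
    rcases Finset.mem_union.mp hC with hC | hC
    · exact hC1 C hC
    · exact hC2 C hC
  · rw [Finset.set_biUnion_union, ← hU1, ← hU2, heq]

lemma irred_not_subset_biUnion {Z : Set (Fin n → ℝ)} (hZ : IsIrredAlgSet Z)
    {ι : Type*} (s : Finset ι) (f : ι → Set (Fin n → ℝ))
    (hf : ∀ i ∈ s, IsAlgSet (f i) ∧ Z ∩ f i ≠ Z) : ¬ Z ⊆ ⋃ i ∈ s, f i := by
  classical
  induction s using Finset.induction_on with
  | empty =>
    intro hsub
    simp only [Finset.notMem_empty, Set.iUnion_of_empty, Set.iUnion_empty] at hsub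
    exact hZ.2.1.ne_empty (Set.subset_empty_iff.mp hsub)
  | @insert a s ha IH =>
    intro hsub
    rw [Finset.set_biUnion_insert] at hsub
    have hfa := hf a (Finset.mem_insert_self a s)
    have hfs : ∀ i ∈ s, IsAlgSet (f i) ∧ Z ∩ f i ≠ Z :=
      fun i hi => hf i (Finset.mem_insert_of_mem hi)
    have hU : IsAlgSet (⋃ i ∈ s, f i) := algSet_biUnion s f fun i hi => (hfs i hi).1
    have heq : Z = (Z ∩ f a) ∪ (Z ∩ ⋃ i ∈ s, f i) := by
      rw [← Set.inter_union_distrib_left]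
      exact (Set.inter_eq_left.mpr hsub).symm
    rcases hZ.2.2 _ _ (algSet_inter hZ.1 hfa.1) (algSet_inter hZ.1 hU) heq with he | he
    · exact hfa.2 he.symm
    · exact IH hfs fun x hx => (he ▸ hx : x ∈ Z ∩ ⋃ i ∈ s, f i).2




lemma step {X : Set (Fin n → ℝ)} {h : (Fin n → ℝ) → ℝ}
    (hHR : HereditarilyRational X h)
    {Y : Set (Fin n → ℝ)} (hY : IsAlgSet Y) (hYX : Y ⊆ X) (hne : Y.Nonempty) :
    ∃ B, IsAlgSet B ∧ B ⊂ Y ∧ RegularOn h (Y \ B) := by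
  classical
  obtain ⟨𝒞, hirr, hcover⟩ := decomp Y hY
  have hCY : ∀ C ∈ 𝒞, C ⊆ Y := fun C hC => hcover ▸ fun x hx => Set.mem_biUnion hC hx
  have hCne : 𝒞.Nonempty := by
    rcases Finset.eq_empty_or_nonempty 𝒞 with rfl | hne'
    · simp only [Finset.notMem_empty, Set.iUnion_of_empty, Set.iUnion_empty] at hcover
      exact absurd hcover hne.ne_empty
    · exact hne'
  -- choose the bad set of each irreducible component
  have hch : ∀ C : Set (Fin n → ℝ), ∃ B', C ∈ 𝒞 → IsAlgSet B' ∧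
      (∀ W : Set (Fin n → ℝ), IsAlgSet W → C \ B' ⊆ W → C ⊆ W) ∧ RegularOn h (C \ B') := by
    intro C
    by_cases hC : C ∈ 𝒞
    · obtain ⟨B', hB⟩ := hHR C ((hCY C hC).trans hYX) (hirr C hC)
      exact ⟨B', fun _ => hB⟩
    · exact ⟨∅, fun hc => absurd hc hC⟩
  choose bad hbad using hch
  set g : Set (Fin n → ℝ) × Set (Fin n → ℝ) → Set (Fin n → ℝ) :=
    fun P => if P.1 = P.2 then ∅ else P.1 ∩ P.2 with hg
  set B₁ : Set (Fin n → ℝ) := ⋃ C ∈ 𝒞, C ∩ bad C with hB₁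
  set B₂ : Set (Fin n → ℝ) := ⋃ P ∈ 𝒞 ×ˢ 𝒞, g P with hB₂
  have hB1alg : IsAlgSet B₁ := algSet_biUnion _ _ fun C hC =>
    algSet_inter (hirr C hC).1 (hbad C hC).1
  have hB2alg : IsAlgSet B₂ := by
    refine algSet_biUnion _ _ fun P hP => ?_
    rcases Finset.mem_product.mp hP with ⟨h1, h2⟩
    by_cases hPe : P.1 = P.2
    · simp only [hg, hPe, if_pos rfl]; exact algSet_empty
    · simp only [hg, if_neg hPe]; exact algSet_inter (hirr _ h1).1 (hirr _ h2).1
  have hB1Y : B₁ ⊆ Y := by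
    refine Set.iUnion₂_subset fun C hC => ?_
    exact (Set.inter_subset_left).trans (hCY C hC)
  have hB2Y : B₂ ⊆ Y := by
    refine Set.iUnion₂_subset fun P hP => ?_
    rcases Finset.mem_product.mp hP with ⟨h1, _⟩
    by_cases hPe : P.1 = P.2
    · simp [hg, hPe]
    · simp only [hg, if_neg hPe]
      exact Set.inter_subset_left.trans (hCY _ h1)
  -- membership facts about B₂
  have hB2mem : ∀ {x} {C D : Set (Fin n → ℝ)}, C ∈ 𝒞 → D ∈ 𝒞 → C ≠ D →
      x ∈ C → x ∈ D → x ∈ B₂ := by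
    intro x C D hC hD hCD hxC hxD
    refine Set.mem_biUnion (Finset.mem_product.mpr ⟨hC, hD⟩ : (C, D) ∈ 𝒞 ×ˢ 𝒞) ?_
    simp only [hg, if_neg hCD]
    exact ⟨hxC, hxD⟩
  -- a maximal component is not contained in B₁ ∪ B₂
  obtain ⟨Zm, hZm, hmax'⟩ := Finset.exists_maximal hCne
  have hmax : ∀ C ∈ 𝒞, ¬ Zm < C := fun C hC hlt =>
    lt_irrefl _ (lt_of_lt_of_le hlt (hmax' hC hlt.le))
  have hZirr := hirr Zm hZm
  have hnotB1 : ¬ Zm ⊆ B₁ := by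
    refine irred_not_subset_biUnion hZirr 𝒞 _ fun C hC => ?_
    refine ⟨algSet_inter (hirr C hC).1 (hbad C hC).1, fun he => ?_⟩
    have hsub : Zm ⊆ C ∩ bad C := fun x hx => (he.symm.subset hx).2
    by_cases hCZ : C = Zm
    · subst hCZ
      have : C \ bad C = ∅ := by
        rw [Set.diff_eq_empty]
        exact hsub.trans Set.inter_subset_right
      have := (hbad C hC).2.1 ∅ algSet_empty (by rw [this])
      exact (hirr C hC).2.1.ne_empty (Set.subset_empty_iff.mp this)
    · have hZC : Zm ⊆ C := hsub.trans Set.inter_subset_left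
      exact hmax C hC (lt_of_le_of_ne hZC fun hzc => hCZ hzc.symm)
  have hnotB2 : ¬ Zm ⊆ B₂ := by
    refine irred_not_subset_biUnion hZirr (𝒞 ×ˢ 𝒞) g fun P hP => ?_
    rcases Finset.mem_product.mp hP with ⟨h1, h2⟩
    by_cases hPe : P.1 = P.2
    · refine ⟨by simp [hg, hPe, algSet_empty], ?_⟩
      simp only [hg, if_pos hPe, Set.inter_empty]
      exact fun he => hZirr.2.1.ne_empty he.symm
    · simp only [hg, if_neg hPe]
      refine ⟨algSet_inter (hirr _ h1).1 (hirr _ h2).1, fun he => ?_⟩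
      have hsub : Zm ⊆ P.1 ∩ P.2 := fun x hx => (he.symm.subset hx).2
      have he1 : P.1 = Zm := by
        by_contra hne1
        exact hmax P.1 h1 (lt_of_le_of_ne (hsub.trans Set.inter_subset_left)
          (fun hzc => hne1 hzc.symm))
      have he2 : P.2 = Zm := by
        by_contra hne2
        exact hmax P.2 h2 (lt_of_le_of_ne (hsub.trans Set.inter_subset_right)
          (fun hzc => hne2 hzc.symm))
      exact hPe (he1.trans he2.symm)
  have hnotB : ¬ Zm ⊆ B₁ ∪ B₂ := by
    intro hsub
    have heq : Zm = (Zm ∩ B₁) ∪ (Zm ∩ B₂) := by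
      rw [← Set.inter_union_distrib_left]
      exact (Set.inter_eq_left.mpr hsub).symm
    rcases hZirr.2.2 _ _ (algSet_inter hZirr.1 hB1alg) (algSet_inter hZirr.1 hB2alg) heq
      with he | he
    · exact hnotB1 fun x hx => (he.subset hx).2
    · exact hnotB2 fun x hx => (he.subset hx).2
  refine ⟨B₁ ∪ B₂, algSet_union hB1alg hB2alg, ?_, ?_⟩
  · refine Set.ssubset_iff_subset_ne.mpr ⟨Set.union_subset hB1Y hB2Y, fun heq => ?_⟩
    exact hnotB (heq ▸ hCY Zm hZm)
  · -- regularity on Y \ (B₁ ∪ B₂)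
    intro x hx
    obtain ⟨hxY, hxB⟩ := hx
    have hxB1 : x ∉ B₁ := fun hc => hxB (Or.inl hc)
    have hxB2 : x ∉ B₂ := fun hc => hxB (Or.inr hc)
    obtain ⟨C, hC, hxC⟩ : ∃ C ∈ 𝒞, x ∈ C := by
      have := hcover ▸ hxY
      simpa using this
    have hxbad : x ∉ bad C := fun hc => hxB1 (Set.mem_biUnion hC ⟨hxC, hc⟩)
    obtain ⟨p, q, hq, hpq⟩ := (hbad C hC).2.2 x ⟨hxC, hxbad⟩
    -- the union of the other components
    have hUalg : IsAlgSet (⋃ D ∈ 𝒞.erase C, D) :=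
      algSet_biUnion _ _ fun D hD => (hirr D (Finset.mem_of_mem_erase hD)).1
    obtain ⟨S, hS⟩ := hUalg
    have hxU : x ∉ ⋃ D ∈ 𝒞.erase C, D := by
      intro hc
      simp only [Set.mem_iUnion, exists_prop] at hc
      obtain ⟨D, hD, hxD⟩ := hc
      exact hxB2 (hB2mem hC (Finset.mem_of_mem_erase hD)
        (fun he => (Finset.mem_erase.mp hD).1 he.symm) hxC hxD)
    rw [hS] at hxU
    have : ¬ ∀ r ∈ S, eval x r = 0 := hxU
    push_neg at this
    obtain ⟨r, hrS, hrx⟩ := this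
    refine ⟨p * r, q * r, ?_, ?_⟩
    · rw [map_mul]; exact mul_ne_zero hq hrx
    · rintro y ⟨hyY, hyB⟩ hqr
      rw [map_mul] at hqr
      have hqy : eval y q ≠ 0 := fun hc => hqr (by rw [hc, zero_mul])
      have hry : eval y r ≠ 0 := fun hc => hqr (by rw [hc, mul_zero])
      have hyU : y ∉ ⋃ D ∈ 𝒞.erase C, D := by
        rw [hS]
        intro hc
        exact hry (hc r hrS)
      have hyC : y ∈ C := by
        obtain ⟨D, hD, hyD⟩ : ∃ D ∈ 𝒞, y ∈ D := by
          have := hcover ▸ hyY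
          simpa using this
        by_cases hDC : D = C
        · exact hDC ▸ hyD
        · exact absurd (Set.mem_biUnion (Finset.mem_erase.mpr ⟨hDC, hD⟩) hyD) hyU
      have hybad : y ∉ bad C := fun hc => hyB (Or.inl (Set.mem_biUnion hC ⟨hyC, hc⟩))
      rw [map_mul, map_mul, mul_div_mul_right _ _ hry]
      exact hpq y ⟨hyC, hybad⟩ hqy


lemma chain {X : Set (Fin n → ℝ)} {h : (Fin n → ℝ) → ℝ}
    (hHR : HereditarilyRational X h) :
    ∀ Y : Set (Fin n → ℝ), IsAlgSet Y → Y ⊆ X →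
      ∃ (m : ℕ) (F : ℕ → Set (Fin n → ℝ)), F 0 = ∅ ∧ F (m + 1) = Y ∧
        (∀ i ≤ m, IsAlgSet (F (i + 1)) ∧ F i ⊆ F (i + 1)) ∧
        ∀ i ≤ m, RegularOn h (F (i + 1) \ F i) := by
  intro Y
  refine (algLt_wf (n := n)).induction
    (C := fun Y => IsAlgSet Y → Y ⊆ X →
      ∃ (m : ℕ) (F : ℕ → Set (Fin n → ℝ)), F 0 = ∅ ∧ F (m + 1) = Y ∧
        (∀ i ≤ m, IsAlgSet (F (i + 1)) ∧ F i ⊆ F (i + 1)) ∧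
        ∀ i ≤ m, RegularOn h (F (i + 1) \ F i)) Y ?_
  intro Y IH hY hYX
  rcases Set.eq_empty_or_nonempty Y with rfl | hne
  · refine ⟨0, fun _ => ∅, rfl, rfl, ?_, ?_⟩
    · intro i _; exact ⟨algSet_empty, subset_rfl⟩
    · intro i _ x hx; exact absurd hx.1 (Set.notMem_empty x)
  obtain ⟨B, hBalg, hBY, hreg⟩ := step hHR hY hYX hne
  obtain ⟨m, F, hF0, hFm, hch, hrg⟩ := IH B ⟨hBalg, hBY⟩ hBalg (hBY.1.trans hYX)
  refine ⟨m + 1, fun i => if i ≤ m + 1 then F i else Y, ?_, ?_, ?_, ?_⟩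
  · simp [hF0]
  · simp
  · intro i hi
    rcases Nat.lt_or_ge i (m + 1) with hlt | hge
    · have h1 : i ≤ m := Nat.lt_succ_iff.mp hlt
      have h2 : i + 1 ≤ m + 1 := Nat.succ_le_succ h1
      simp only [if_pos (h1.trans (Nat.le_succ m)), if_pos h2]
      exact hch i h1
    · have hieq : i = m + 1 := le_antisymm hi hge
      subst hieq
      simp only [if_pos le_rfl, if_neg (by omega : ¬ m + 1 + 1 ≤ m + 1), hFm]
      exact ⟨hY, hBY.1⟩
  · intro i hi
    rcases Nat.lt_or_ge i (m + 1) with hlt | hge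
    · have h1 : i ≤ m := Nat.lt_succ_iff.mp hlt
      have h2 : i + 1 ≤ m + 1 := Nat.succ_le_succ h1
      simp only [if_pos (h1.trans (Nat.le_succ m)), if_pos h2]
      exact hrg i h1
    · have hieq : i = m + 1 := le_antisymm hi hge
      subst hieq
      simp only [if_pos le_rfl, if_neg (by omega : ¬ m + 1 + 1 ≤ m + 1), hFm]
      exact hreg

end Stmt12Aux

theorem stmt12 {n : ℕ} (X : Set (Fin n → ℝ)) (hX : IsAlgSet X)
    (h : (Fin n → ℝ) → ℝ) (hc : ContinuousOn h X) :
    HereditarilyRational X h ↔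
      ∃ (m : ℕ) (F : ℕ → Set (Fin n → ℝ)), F 0 = ∅ ∧ F (m + 1) = X ∧
        (∀ i ≤ m, IsAlgSet (F (i + 1)) ∧ F i ⊆ F (i + 1)) ∧
        ∀ i ≤ m, RegularOn h (F (i + 1) \ F i) := by
  classical
  constructor
  · intro hHR
    exact Stmt12Aux.chain hHR X hX subset_rfl
  · rintro ⟨m, F, hF0, hFm, hch, hrg⟩ Z hZX hZirr
    have hZm : Z ⊆ F (m + 1) := hFm ▸ hZX
    have hex : ∃ j, Z ⊆ F j := ⟨m + 1, hZm⟩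
    obtain ⟨i, hile, hspec, hmin⟩ : ∃ i, i ≤ m + 1 ∧ Z ⊆ F i ∧ ∀ j < i, ¬ Z ⊆ F j :=
      ⟨Nat.find hex, Nat.find_min' hex hZm, Nat.find_spec hex,
        fun j hj => Nat.find_min hex hj⟩
    have hi0 : i ≠ 0 := by
      intro h0
      rw [h0, hF0] at hspec
      exact hZirr.2.1.ne_empty (Set.subset_empty_iff.mp hspec)
    obtain ⟨k, rfl⟩ := Nat.exists_eq_succ_of_ne_zero hi0
    have hkm : k ≤ m := by omega
    have hFkalg : IsAlgSet (F k) := by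
      match k with
      | 0 => rw [hF0]; exact Stmt12Aux.algSet_empty
      | j + 1 => exact (hch j (by omega)).1
    refine ⟨F k, hFkalg, ?_, ?_⟩
    · intro W hW hsubW
      have hcov : Z ⊆ W ∪ F k := by
        intro z hz
        by_cases hzF : z ∈ F k
        · exact Or.inr hzF
        · exact Or.inl (hsubW ⟨hz, hzF⟩)
      have heq : Z = (Z ∩ W) ∪ (Z ∩ F k) := by
        rw [← Set.inter_union_distrib_left]
        exact (Set.inter_eq_left.mpr hcov).symm
      rcases hZirr.2.2 _ _ (Stmt12Aux.algSet_inter hZirr.1 hW)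
        (Stmt12Aux.algSet_inter hZirr.1 hFkalg) heq with he | he
      · exact fun z hz => (he.subset hz).2
      · exact absurd (fun z hz => (he.subset hz).2) (hmin k (Nat.lt_succ_self k))
    · intro x hx
      obtain ⟨p, q, hq, hpq⟩ := hrg k hkm x ⟨hspec hx.1, hx.2⟩
      exact ⟨p, q, hq, fun y hy hqy => hpq y ⟨hspec hy.1, hy.2⟩ hqy⟩
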